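/- Let f : ℝ^n → ℝ be a function of the form f(η) = Σ_{w ∈ {−1,0,1}^n} c_w e^{2πi w • η} with c_w ∈ ℂ. Then for every j ∈ {1, ..., n} and every η ∈ ℝ^n, the partial derivative of f with respect to η_j satisfies the parameter-shift rule ∂_{η_j} f(η) = π ( f(η + (1/4) e_j) − f(η − (1/4) e_j) ), where e_j is the j-th standard basis vector of ℝ^n. -/

import Mathlib

open Complex Real

/-- STATEMENT 13: every expectation value function
`f(η) = Σ_{w ∈ {-1,0,1}^n} c_w e^{2πi w • η}` satisfies the parameter-shift rule
`∂_{η_j} f(η) = π (f(η + (1/4)e_j) - f(η - (1/4)e_j))`. -/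
theorem parameter_shift_rule (n : ℕ)
    (f : (Fin n → ℝ) → ℝ) (c : (Fin n → ℝ) → ℂ)
    (hf : ∀ η : Fin n → ℝ, (f η : ℂ) =
      ∑ w ∈ Fintype.piFinset (fun _ : Fin n => ({-1, 0, 1} : Finset ℝ)),
        c w * Complex.exp (2 * Real.pi * Complex.I * (∑ j, w j * η j)))
    (j : Fin n) (η : Fin n → ℝ) :
    HasDerivAt (fun t : ℝ => f (Function.update η j t))
      (Real.pi * (f (η + (1/4 : ℝ) • (Pi.single j 1 : Fin n → ℝ)) - f (η - (1/4 : ℝ) • (Pi.single j 1 : Fin n → ℝ))))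
      (η j) := by
  classical
  set S := Fintype.piFinset (fun _ : Fin n => ({-1, 0, 1} : Finset ℝ)) with hS
  -- the "rest" part of the exponent
  set A : (Fin n → ℝ) → ℂ := fun w => ∑ k ∈ Finset.univ.erase j, (w k : ℂ) * (η k : ℂ)
    with hA
  have key : ∀ (w : Fin n → ℝ) (t : ℝ),
      (∑ k, (w k : ℂ) * ((Function.update η j t k : ℝ) : ℂ)) = A w + (w j : ℂ) * t := by
    intro w t
    rw [← Finset.add_sum_erase _ _ (Finset.mem_univ j)]
    rw [Function.update_self]
    have : ∀ k ∈ Finset.univ.erase j, (w k : ℂ) * ((Function.update η j t k : ℝ) : ℂ)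
        = (w k : ℂ) * (η k : ℂ) := by
      intro k hk
      rw [Function.update_of_ne (Finset.mem_erase.1 hk).1]
    rw [Finset.sum_congr rfl this, hA]
    ring
  -- the complex-valued version of the function along the line
  set g : ℝ → ℂ := fun t => ∑ w ∈ S,
      c w * Complex.exp (2 * Real.pi * Complex.I * (A w + (w j : ℂ) * t)) with hg
  have hfg : ∀ t : ℝ, ((f (Function.update η j t) : ℝ) : ℂ) = g t := by
    intro t
    rw [hf, hg]
    refine Finset.sum_congr rfl fun w _ => ?_
    rw [show ((∑ k, w k * Function.update η j t k : ℝ) : ℂ) = A w + (w j : ℂ) * t from by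
      push_cast; exact key w t]
  -- derivative of g
  set D : ℂ := ∑ w ∈ S,
      c w * Complex.exp (2 * Real.pi * Complex.I * (A w + (w j : ℂ) * (η j : ℝ)))
        * (2 * Real.pi * Complex.I * (w j : ℂ)) with hD
  have hgD : HasDerivAt g D (η j) := by
    rw [hg, hD]
    apply HasDerivAt.fun_sum
    intro w _
    have h1 : HasDerivAt (fun t : ℝ => ((t : ℂ))) 1 (η j) := by
      exact Complex.ofRealCLM.hasDerivAt (x := η j)
    have h2 : HasDerivAt (fun t : ℝ => 2 * Real.pi * Complex.I * (A w + (w j : ℂ) * t))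
        (2 * Real.pi * Complex.I * (w j : ℂ)) (η j) := by
      have := ((h1.const_mul ((w j : ℂ))).const_add (A w)).const_mul
        (2 * Real.pi * Complex.I)
      simpa [mul_one] using this
    have h3 := h2.cexp
    have h4 := h3.const_mul (c w)
    convert h4 using 1
    · rfl
    · ring
  -- the shifted points are updates
  have hplus : η + (1/4 : ℝ) • (Pi.single j 1 : Fin n → ℝ)
      = Function.update η j (η j + 1/4) := by
    funext k
    by_cases hk : k = j
    · subst hk; simp
    · simp [hk, Pi.single_apply, Function.update_of_ne hk]
  have hminus : η - (1/4 : ℝ) • (Pi.single j 1 : Fin n → ℝ)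
      = Function.update η j (η j - 1/4) := by
    funext k
    by_cases hk : k = j
    · subst hk; simp
    · simp [hk, Pi.single_apply, Function.update_of_ne hk]
  -- D equals the claimed (real) derivative
  have hDval : D = ((Real.pi *
      (f (η + (1/4 : ℝ) • (Pi.single j 1 : Fin n → ℝ))
        - f (η - (1/4 : ℝ) • (Pi.single j 1 : Fin n → ℝ))) : ℝ) : ℂ) := by
    push_cast
    rw [hplus, hminus, hfg (η j + 1/4), hfg (η j - 1/4), hg, hD]
    rw [← Finset.sum_sub_distrib, Finset.mul_sum]
    apply Finset.sum_congr rfl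
    intro w hw
    have hwj : w j ∈ ({-1, 0, 1} : Finset ℝ) := by
      have := Fintype.mem_piFinset.1 (hS ▸ hw)
      exact this j
    have e1 : Complex.exp (2 * Real.pi * Complex.I * (A w + (w j : ℂ) * ((η j : ℝ) + 1/4 : ℝ)))
        = Complex.exp (2 * Real.pi * Complex.I * (A w + (w j : ℂ) * (η j : ℝ)))
          * Complex.exp (2 * Real.pi * Complex.I * ((w j : ℂ) * (1/4 : ℂ))) := by
      rw [← Complex.exp_add]; congr 1; push_cast; ring
    have e2 : Complex.exp (2 * Real.pi * Complex.I * (A w + (w j : ℂ) * ((η j : ℝ) - 1/4 : ℝ)))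
        = Complex.exp (2 * Real.pi * Complex.I * (A w + (w j : ℂ) * (η j : ℝ)))
          * Complex.exp (- (2 * Real.pi * Complex.I * ((w j : ℂ) * (1/4 : ℂ)))) := by
      rw [← Complex.exp_add]; congr 1; push_cast; ring
    rw [e1, e2]
    have hid : (2 * (Real.pi : ℂ) * Complex.I * (w j : ℂ))
        = (Real.pi : ℂ) * (Complex.exp (2 * Real.pi * Complex.I * ((w j : ℂ) * (1/4 : ℂ)))
            - Complex.exp (-(2 * Real.pi * Complex.I * ((w j : ℂ) * (1/4 : ℂ))))) := by
      have hI : Complex.exp ((Real.pi : ℂ) / 2 * Complex.I) = Complex.I := by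
        rw [show ((Real.pi : ℂ) / 2) = ((Real.pi / 2 : ℝ) : ℂ) from by push_cast; ring,
          Complex.exp_mul_I, ← Complex.ofReal_cos, ← Complex.ofReal_sin]
        norm_num
      have hmI : Complex.exp (-((Real.pi : ℂ) / 2 * Complex.I)) = -Complex.I := by
        rw [Complex.exp_neg, hI, Complex.inv_I]
      simp only [Finset.mem_insert, Finset.mem_singleton] at hwj
      rcases hwj with h | h | h <;> rw [h] <;> push_cast
      · rw [show (2 * (Real.pi : ℂ) * Complex.I * (-1 * (1/4 : ℂ)))
            = -((Real.pi : ℂ) / 2 * Complex.I) from by ring, neg_neg, hI, hmI]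
        ring
      · norm_num
      · rw [show (2 * (Real.pi : ℂ) * Complex.I * (1 * (1/4 : ℂ)))
            = ((Real.pi : ℂ) / 2 * Complex.I) from by ring, hI, hmI]
        ring
    rw [mul_assoc, hid]
    ring
  -- pass from the complex function to the real one
  have hre : (fun t : ℝ => f (Function.update η j t)) = fun t => (g t).re := by
    funext t
    rw [← hfg t, Complex.ofReal_re]
  rw [hre]
  have := (Complex.reCLM.hasFDerivAt.comp_hasDerivAt (η j) hgD)
  convert this using 1
  · rfl
  · rfl
  · rfl
  · rw [hDval]
    simp
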